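/- Let ℓ, d be coprime positive integers, let A_ℓ = ℤ[X]/(Φ_{2ℓ}(X)) with v the image of X (a unit of A_ℓ), and set v_i = v^d and v_i^♯ = ((−1)^{ℓ+1} v^ℓ)^d. Then for natural numbers a, t: (i) if ℓ divides both a and t, the balanced Gaussian binomial coefficients satisfy [a, t]_{v_i} = [a/ℓ, t/ℓ]_{v_i^♯} in A_ℓ; (ii) if ℓ divides a but ℓ does not divide t, then [a, t]_{v_i} = 0 in A_ℓ. -/

import Mathlib

/-- The Gaussian binomial polynomial `B(m,k) ∈ ℤ[q]`, determined by the recursion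
`B(m,0) = 1`, `B(0,k) = 0` for `k > 0`, and `B(m,k) = B(m-1,k-1) + q^k · B(m-1,k)`. -/
noncomputable def gaussBinomialPoly : ℕ → ℕ → Polynomial ℤ
  | _, 0 => 1
  | 0, _ + 1 => 0
  | m + 1, k + 1 =>
      gaussBinomialPoly m k + Polynomial.X ^ (k + 1) * gaussBinomialPoly m (k + 1)

/-- The balanced Gaussian binomial coefficient `[m, k]_w = w^{-k(m-k)} · B(m,k)(w²)`
attached to a unit `w` of a commutative ring `R`. -/
noncomputable def balancedGaussBinomial {R : Type*} [CommRing R] (w : Rˣ) (m k : ℕ) : R :=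
  ((w ^ (-((k : ℤ) * ((m : ℤ) - (k : ℤ))))) : Rˣ) *
    Polynomial.aeval ((w : R) ^ 2) (gaussBinomialPoly m k)

/-- The ring `A_ℓ = ℤ[X]/(Φ_{2ℓ}(X))`. -/
abbrev cyclotomicQuotientRing (ℓ : ℕ) : Type :=
  Polynomial ℤ ⧸ Ideal.span {Polynomial.cyclotomic (2 * ℓ) ℤ}

open Polynomial Finset

namespace GaussAux

lemma gB_zero (k : ℕ) : gaussBinomialPoly 0 (k + 1) = 0 := by
  simp [gaussBinomialPoly]

lemma gB_base (m : ℕ) : gaussBinomialPoly m 0 = 1 := by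
  cases m <;> simp [gaussBinomialPoly]

lemma gB_succ (m k : ℕ) : gaussBinomialPoly (m + 1) (k + 1)
    = gaussBinomialPoly m k + Polynomial.X ^ (k + 1) * gaussBinomialPoly m (k + 1) := by
  simp [gaussBinomialPoly]

lemma gB_lt : ∀ m k : ℕ, m < k → gaussBinomialPoly m k = 0 := by
  intro m
  induction m with
  | zero =>
    rintro (_ | k) h
    · omega
    · exact gB_zero k
  | succ m ih =>
    rintro (_ | k) h
    · omega
    · rw [gB_succ, ih k (by omega), ih (k + 1) (by omega)]
      ring

lemma gB_self : ∀ m : ℕ, gaussBinomialPoly m m = 1 := by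
  intro m
  induction m with
  | zero => exact gB_base 0
  | succ m ih =>
    rw [gB_succ, ih, gB_lt m (m + 1) (by omega)]
    ring

/-- The quantum integer `[n] = 1 + q + ⋯ + q^{n-1}`. -/
noncomputable def qnum (n : ℕ) : Polynomial ℤ := ∑ i ∈ Finset.range n, Polynomial.X ^ i

lemma qnum_succ (n : ℕ) : qnum (n + 1) = qnum n + Polynomial.X ^ n := by
  simp [qnum, Finset.sum_range_succ]

lemma qnum_add (a b : ℕ) : qnum (a + b) = qnum a + Polynomial.X ^ a * qnum b := by
  induction b with
  | zero => simp [qnum]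
  | succ b ih =>
    rw [show a + (b + 1) = (a + b) + 1 from rfl, qnum_succ, ih, qnum_succ, pow_add]
    ring

/-- The identity `[m+1-k]·B(m+1,k) = [m+1]·B(m,k)`. -/
lemma I2 : ∀ m k : ℕ, qnum (m + 1 - k) * gaussBinomialPoly (m + 1) k
    = qnum (m + 1) * gaussBinomialPoly m k := by
  intro m
  induction m with
  | zero =>
    rintro (_ | _ | k)
    · simp [gB_base]
    · show qnum 0 * _ = _ * gaussBinomialPoly 0 1
      rw [gB_zero 0]
      simp [qnum]
    · rw [show 0 + 1 - (k + 2) = 0 from by omega, gB_zero (k + 1),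
        gB_lt 1 (k + 2) (by omega)]
      simp [qnum]
  | succ m ih =>
    rintro (_ | s)
    · simp [gB_base]
    · by_cases hs : s ≤ m
      · have h1 : m + 1 + 1 - (s + 1) = (m - s) + 1 := by omega
        have h4 : m + 1 - s = (m - s) + 1 := by omega
        have hx : Polynomial.X ^ (s + 1) * Polynomial.X ^ (m - s)
            = (Polynomial.X : Polynomial ℤ) ^ (m + 1) := by
          rw [← pow_add]; congr 1; omega
        have e1 := ih s
        rw [h4, qnum_succ] at e1
        have e2 := ih (s + 1)
        rw [show m + 1 - (s + 1) = m - s from by omega] at e2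
        rw [gB_succ (m + 1) s, h1, qnum_succ (m - s), qnum_succ (m + 1)]
        linear_combination e1 + Polynomial.X ^ (s + 1) * e2
          - qnum (m + 1) * (gB_succ m s)
          + gaussBinomialPoly (m + 1) (s + 1) * hx
      · rw [show m + 1 + 1 - (s + 1) = 0 from by omega, gB_lt (m + 1) (s + 1) (by omega)]
        simp [qnum]

/-- The identity `[k+1]·B(m+1,k+1) = [m+1]·B(m,k)`. -/
lemma I1 : ∀ m k : ℕ, qnum (k + 1) * gaussBinomialPoly (m + 1) (k + 1)
    = qnum (m + 1) * gaussBinomialPoly m k := by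
  intro m
  induction m with
  | zero =>
    rintro (_ | k)
    · rw [gB_succ, gB_base, gB_zero]; ring
    · rw [gB_lt 1 (k + 2) (by omega), gB_zero]; ring
  | succ m ih =>
    intro k
    by_cases hk : k ≤ m + 1
    · have e1 := ih k
      have e2 := I2 m k
      have h3 : (k + 1) + (m + 1 - k) = m + 2 := by omega
      have hq : qnum (m + 1 + 1) = qnum (k + 1) + Polynomial.X ^ (k + 1) * qnum (m + 1 - k) := by
        rw [← qnum_add, h3]
      rw [gB_succ (m + 1) k, hq]
      linear_combination Polynomial.X ^ (k + 1) * e1 - Polynomial.X ^ (k + 1) * e2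
    · rw [gB_lt (m + 1) k (by omega), gB_lt (m + 1 + 1) (k + 1) (by omega)]
      ring

section Eval

variable {R : Type*} [CommRing R]

lemma aeval_qnum (q : R) (n : ℕ) :
    Polynomial.aeval q (qnum n) = ∑ i ∈ Finset.range n, q ^ i := by
  simp [qnum]

lemma aeval_gB_succ (q : R) (m k : ℕ) :
    Polynomial.aeval q (gaussBinomialPoly (m + 1) (k + 1))
      = Polynomial.aeval q (gaussBinomialPoly m k)
        + q ^ (k + 1) * Polynomial.aeval q (gaussBinomialPoly m (k + 1)) := by
  rw [gB_succ]; simp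

lemma aeval_gB_base (q : R) (m : ℕ) : Polynomial.aeval q (gaussBinomialPoly m 0) = 1 := by
  rw [gB_base]; simp

lemma aeval_gB_eq_zero [IsDomain R] {ℓ : ℕ} {q : R} (hq : IsPrimitiveRoot q ℓ)
    {r : ℕ} (h0 : 0 < r) (hr : r < ℓ) :
    Polynomial.aeval q (gaussBinomialPoly ℓ r) = 0 := by
  obtain ⟨s, rfl⟩ : ∃ s, r = s + 1 := ⟨r - 1, by omega⟩
  obtain ⟨m, rfl⟩ : ∃ m, ℓ = m + 1 := ⟨ℓ - 1, by omega⟩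
  have hI := congrArg (Polynomial.aeval q) (I1 m s)
  rw [map_mul, map_mul] at hI
  have hgeom : ∀ n : ℕ, (Polynomial.aeval q (qnum n)) * (q - 1) = q ^ n - 1 := by
    intro n; rw [aeval_qnum]; exact geom_sum_mul q n
  have hq1 : q ≠ 1 := hq.ne_one (by omega)
  have h1 : Polynomial.aeval q (qnum (m + 1)) = 0 := by
    have h := hgeom (m + 1)
    rw [hq.pow_eq_one, sub_self] at h
    rcases mul_eq_zero.mp h with h | h
    · exact h
    · exact absurd (sub_eq_zero.mp h) hq1
  have h2 : Polynomial.aeval q (qnum (s + 1)) ≠ 0 := by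
    intro hc
    have h := hgeom (s + 1)
    rw [hc, zero_mul] at h
    exact hq.pow_ne_one_of_pos_of_lt (by omega) hr (by linear_combination -h)
  rw [h1, zero_mul] at hI
  exact (mul_eq_zero.mp hI).resolve_left h2

/-- q-Lucas in the form we need. -/
lemma lucas (ℓ : ℕ) (hℓ : 0 < ℓ) (q : R) (hq : q ^ ℓ = 1)
    (hz : ∀ r, 0 < r → r < ℓ → Polynomial.aeval q (gaussBinomialPoly ℓ r) = 0) :
    ∀ m k : ℕ, Polynomial.aeval q (gaussBinomialPoly m k)
      = ((m / ℓ).choose (k / ℓ) : R) * Polynomial.aeval q (gaussBinomialPoly (m % ℓ) (k % ℓ)) := by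
  have hqmod : ∀ s : ℕ, q ^ s = q ^ (s % ℓ) := by
    intro s
    conv_lhs => rw [show s = ℓ * (s / ℓ) + s % ℓ from (Nat.div_add_mod s ℓ).symm]
    rw [pow_add, pow_mul, hq, one_pow, one_mul]
  have hmodlt : ∀ s : ℕ, s % ℓ < ℓ := fun s => Nat.mod_lt s hℓ
  have hsuccA : ∀ s : ℕ, s % ℓ + 1 < ℓ → (s + 1) % ℓ = s % ℓ + 1 ∧ (s + 1) / ℓ = s / ℓ := by
    intro s h
    have hd := Nat.div_add_mod s ℓ
    have h1 : s + 1 = ℓ * (s / ℓ) + (s % ℓ + 1) := by omega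
    constructor
    · rw [h1, Nat.mul_add_mod, Nat.mod_eq_of_lt h]
    · rw [h1, Nat.mul_add_div hℓ, Nat.div_eq_of_lt h, Nat.add_zero]
  have hsuccB : ∀ s : ℕ, s % ℓ + 1 = ℓ → (s + 1) % ℓ = 0 ∧ (s + 1) / ℓ = s / ℓ + 1 := by
    intro s h
    have hd := Nat.div_add_mod s ℓ
    have h1 : s + 1 = ℓ * (s / ℓ + 1) := by
      have : ℓ * (s / ℓ + 1) = ℓ * (s / ℓ) + ℓ := by ring
      omega
    constructor
    · rw [h1, Nat.mul_mod_right]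
    · rw [h1, Nat.mul_div_cancel_left _ hℓ]
  intro m
  induction m with
  | zero =>
    intro k
    rcases k with _ | k
    · simp [gB_base]
    · rw [gB_zero]
      by_cases h : ℓ ∣ (k + 1)
      · have : 0 < (k + 1) / ℓ := Nat.div_pos (Nat.le_of_dvd (by omega) h) hℓ
        rw [Nat.choose_eq_zero_of_lt (by simpa using this)]
        simp
      · have : (k + 1) % ℓ ≠ 0 := fun hc => h (Nat.dvd_of_mod_eq_zero hc)
        obtain ⟨u, hu⟩ : ∃ u, (k + 1) % ℓ = u + 1 := ⟨(k + 1) % ℓ - 1, by omega⟩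
        rw [Nat.zero_mod, hu, gB_zero]
        simp
  | succ m ih =>
    intro k
    rcases k with _ | s
    · simp [gB_base]
    · rw [aeval_gB_succ, ih s, ih (s + 1)]
      by_cases hm : m % ℓ + 1 < ℓ
      · obtain ⟨hm1, hm2⟩ := hsuccA m hm
        by_cases hs : s % ℓ + 1 < ℓ
        · obtain ⟨hs1, hs2⟩ := hsuccA s hs
          rw [hm1, hm2, hs1, hs2, aeval_gB_succ]
          rw [show q ^ (s + 1) = q ^ (s % ℓ + 1) from by rw [hqmod (s + 1), hs1]]
          ring
        · have hse : s % ℓ + 1 = ℓ := by have := hmodlt s; omega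
          obtain ⟨hs1, hs2⟩ := hsuccB s hse
          rw [hm1, hm2, hs1, hs2]
          have hz1 : Polynomial.aeval q (gaussBinomialPoly (m % ℓ) (s % ℓ)) = 0 := by
            rw [gB_lt (m % ℓ) (s % ℓ) (by omega)]; simp
          rw [hz1, show q ^ (s + 1) = 1 from by rw [hqmod (s + 1), hs1, pow_zero],
            aeval_gB_base, aeval_gB_base]
          ring
      · have hme : m % ℓ + 1 = ℓ := by have := hmodlt m; omega
        obtain ⟨hm1, hm2⟩ := hsuccB m hme
        by_cases hs : s % ℓ + 1 < ℓ
        · obtain ⟨hs1, hs2⟩ := hsuccA s hs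
          rw [hm1, hm2, hs1, hs2, gB_zero, map_zero, mul_zero,
            show q ^ (s + 1) = q ^ (s % ℓ + 1) from by rw [hqmod (s + 1), hs1]]
          have hkey : Polynomial.aeval q (gaussBinomialPoly (m % ℓ) (s % ℓ))
              + q ^ (s % ℓ + 1) * Polynomial.aeval q (gaussBinomialPoly (m % ℓ) (s % ℓ + 1))
              = 0 := by
            rw [← aeval_gB_succ, hme]
            exact hz (s % ℓ + 1) (by omega) (by omega)
          linear_combination (((m / ℓ).choose (s / ℓ) : R)) * hkey
        · have hse : s % ℓ + 1 = ℓ := by have := hmodlt s; omega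
          obtain ⟨hs1, hs2⟩ := hsuccB s hse
          rw [hm1, hm2, hs1, hs2]
          have hmm : m % ℓ = s % ℓ := by omega
          have h1 : Polynomial.aeval q (gaussBinomialPoly (m % ℓ) (s % ℓ)) = 1 := by
            rw [hmm, gB_self]; simp
          rw [h1, show q ^ (s + 1) = 1 from by rw [hqmod (s + 1), hs1, pow_zero],
            aeval_gB_base, aeval_gB_base]
          rw [Nat.choose_succ_succ (m / ℓ) (s / ℓ)]
          push_cast
          ring

end Eval

end GaussAux

/-- Let `ℓ, d` be coprime positive integers, let `A_ℓ = ℤ[X]/(Φ_{2ℓ}(X))` with `v` the image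
of `X` (a unit of `A_ℓ`), and set `v_i = v^d` and `v_i^♯ = ((-1)^{ℓ+1} v^ℓ)^d`.  Then for
natural numbers `a, t`:  (i) if `ℓ ∣ a` and `ℓ ∣ t` then `[a, t]_{v_i} = [a/ℓ, t/ℓ]_{v_i^♯}`
in `A_ℓ`; (ii) if `ℓ ∣ a` but `ℓ ∤ t` then `[a, t]_{v_i} = 0` in `A_ℓ`. -/
theorem balancedGaussBinomial_cyclotomicQuotient (ℓ d : ℕ) (hℓ : 0 < ℓ) (hd : 0 < d)
    (hcop : Nat.Coprime ℓ d) (v : (cyclotomicQuotientRing ℓ)ˣ)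
    (hv : (v : cyclotomicQuotientRing ℓ) =
      Ideal.Quotient.mk (Ideal.span {Polynomial.cyclotomic (2 * ℓ) ℤ}) Polynomial.X)
    (a t : ℕ) :
    (ℓ ∣ a → ℓ ∣ t →
      balancedGaussBinomial (v ^ d) a t =
        balancedGaussBinomial (((-1 : (cyclotomicQuotientRing ℓ)ˣ) ^ (ℓ + 1) * v ^ ℓ) ^ d)
          (a / ℓ) (t / ℓ)) ∧
    (ℓ ∣ a → ¬ ℓ ∣ t → balancedGaussBinomial (v ^ d) a t = 0) := by
  classical
  set R := cyclotomicQuotientRing ℓ with hR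
  set I : Ideal (Polynomial ℤ) := Ideal.span {Polynomial.cyclotomic (2 * ℓ) ℤ} with hI
  have h2ℓ : 0 < 2 * ℓ := by omega
  have hirr : Irreducible (Polynomial.cyclotomic (2 * ℓ) ℤ) :=
    Polynomial.cyclotomic.irreducible h2ℓ
  haveI hprime : I.IsPrime := by
    rw [hI, Ideal.span_singleton_prime (Polynomial.cyclotomic_ne_zero _ ℤ)]
    exact hirr.prime
  haveI : IsDomain R := Ideal.Quotient.isDomain I
  have hNe : ((2 * ℓ : ℕ) : R) ≠ 0 := by
    intro hc
    rw [show ((2 * ℓ : ℕ) : R) = (Ideal.Quotient.mk I) ((2 * ℓ : ℕ) : Polynomial ℤ) from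
      (map_natCast _ _).symm, Ideal.Quotient.eq_zero_iff_mem, hI,
      Ideal.mem_span_singleton] at hc
    have hne0 : ((2 * ℓ : ℕ) : Polynomial ℤ) ≠ 0 := by
      exact_mod_cast (by omega : 2 * ℓ ≠ 0)
    have hdeg := Polynomial.natDegree_le_of_dvd hc hne0
    rw [Polynomial.natDegree_cyclotomic, Polynomial.natDegree_natCast] at hdeg
    have := Nat.totient_pos.mpr h2ℓ
    omega
  haveI : NeZero ((2 * ℓ : ℕ) : R) := ⟨hNe⟩
  have hroot : Polynomial.IsRoot (Polynomial.cyclotomic (2 * ℓ) R) (v : R) := by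
    rw [hv]
    have h1 : Polynomial.cyclotomic (2 * ℓ) R
        = Polynomial.map (Int.castRingHom R) (Polynomial.cyclotomic (2 * ℓ) ℤ) :=
      (Polynomial.map_cyclotomic_int _ R).symm
    rw [Polynomial.IsRoot, h1, Polynomial.eval_map]
    have h2 : Polynomial.eval₂ (Int.castRingHom R)
        ((Ideal.Quotient.mk I) Polynomial.X) (Polynomial.cyclotomic (2 * ℓ) ℤ)
        = Polynomial.aeval ((Ideal.Quotient.mk I) Polynomial.X)
            (Polynomial.cyclotomic (2 * ℓ) ℤ) := by
      rw [Polynomial.aeval_def]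
      congr 1
    rw [h2]
    have h3 : Polynomial.aeval ((Ideal.Quotient.mk I) Polynomial.X)
        (Polynomial.cyclotomic (2 * ℓ) ℤ)
        = (Ideal.Quotient.mk I) (Polynomial.cyclotomic (2 * ℓ) ℤ) := by
      rw [show ((Ideal.Quotient.mk I) Polynomial.X)
        = (Ideal.Quotient.mkₐ ℤ I) Polynomial.X from rfl]
      rw [Polynomial.aeval_algHom_apply, Polynomial.aeval_X_left_apply]
      rfl
    rw [h3, Ideal.Quotient.eq_zero_iff_mem]
    exact Ideal.subset_span (Set.mem_singleton _)
  have hprim : IsPrimitiveRoot (v : R) (2 * ℓ) :=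
    (Polynomial.isRoot_cyclotomic_iff).mp hroot
  have hv2ℓ : (v : R) ^ (2 * ℓ) = 1 := hprim.pow_eq_one
  have hvℓ : (v : R) ^ ℓ = -1 := by
    have hne : (v : R) ^ ℓ ≠ 1 := hprim.pow_ne_one_of_pos_of_lt hℓ.ne' (by omega)
    have h2 : ((v : R) ^ ℓ) ^ 2 = 1 := by
      rw [← pow_mul, show ℓ * 2 = 2 * ℓ from by ring]; exact hv2ℓ
    have hsq : ((v : R) ^ ℓ - 1) * ((v : R) ^ ℓ + 1) = 0 := by linear_combination h2
    rcases mul_eq_zero.mp hsq with h | h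
    · exact absurd (by linear_combination h) hne
    · linear_combination h
  have hvℓu : v ^ ℓ = (-1 : Rˣ) := by
    ext
    rw [Units.val_pow_eq_pow_val, hvℓ]
    simp
  have hprim2 : IsPrimitiveRoot ((v : R) ^ 2) ℓ := hprim.pow h2ℓ rfl
  have hprimQ0 : IsPrimitiveRoot (((v : R) ^ 2) ^ d) ℓ := hprim2.pow_of_coprime d hcop.symm
  set Q : R := ((v ^ d : Rˣ) : R) ^ 2 with hQ
  have hQeq : Q = ((v : R) ^ 2) ^ d := by
    rw [hQ, Units.val_pow_eq_pow_val, ← pow_mul, ← pow_mul]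
    congr 1; ring
  have hprimQ : IsPrimitiveRoot Q ℓ := by rw [hQeq]; exact hprimQ0
  set W : Rˣ := ((-1 : Rˣ) ^ (ℓ + 1) * v ^ ℓ) ^ d with hW
  have hWeq : W = (-1 : Rˣ) ^ (d * ℓ) := by
    rw [hW, hvℓu, show ((-1 : Rˣ) ^ (ℓ + 1) * -1) = (-1 : Rˣ) ^ ℓ from by
      rw [pow_succ, mul_assoc, show ((-1 : Rˣ) * -1) = 1 from Units.ext (by simp), mul_one],
      ← pow_mul, mul_comm ℓ d]
  have hWsq : ((W : R)) ^ 2 = 1 := by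
    rw [← Units.val_pow_eq_pow_val, hWeq, ← pow_mul,
      show d * ℓ * 2 = 2 * (d * ℓ) from by ring, pow_mul]
    simp
  have hlucasQ := GaussAux.lucas (R := R) ℓ hℓ Q hprimQ.pow_eq_one
    (fun r h0 hr => GaussAux.aeval_gB_eq_zero hprimQ h0 hr)
  have hlucas1 := GaussAux.lucas (R := R) 1 one_pos (1 : R) (one_pow 1)
    (fun r h0 hr => absurd h0 (by omega))
  have haeval1 : ∀ m k : ℕ, @Polynomial.aeval ℤ R _ _ (Ring.toIntAlgebra R) (1 : R) (gaussBinomialPoly m k)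
      = (m.choose k : R) := by
    intro m k
    have := hlucas1 m k
    simpa [GaussAux.gB_base, Nat.div_one, Nat.mod_one] using this
  constructor
  · rintro ⟨a', rfl⟩ ⟨t', rfl⟩
    have ha' : ℓ * a' / ℓ = a' := Nat.mul_div_cancel_left a' hℓ
    have ht' : ℓ * t' / ℓ = t' := Nat.mul_div_cancel_left t' hℓ
    have ham : ℓ * a' % ℓ = 0 := Nat.mul_mod_right ℓ a'
    have htm : ℓ * t' % ℓ = 0 := Nat.mul_mod_right ℓ t'
    unfold balancedGaussBinomial
    rw [← hQ, hlucasQ (ℓ * a') (ℓ * t'), ha', ht', ham, htm, GaussAux.aeval_gB_base]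
    rw [hWsq, haeval1 a' t']
    have hunit : (v ^ d) ^ (-((↑(ℓ * t') : ℤ) * ((↑(ℓ * a') : ℤ) - (↑(ℓ * t') : ℤ))))
        = W ^ (-((t' : ℤ) * ((a' : ℤ) - (t' : ℤ)))) := by
      have hE : (-((↑(ℓ * t') : ℤ) * ((↑(ℓ * a') : ℤ) - (↑(ℓ * t') : ℤ))))
          = ((ℓ ^ 2 : ℕ) : ℤ) * (-((t' : ℤ) * ((a' : ℤ) - (t' : ℤ)))) := by
        push_cast; ring
      rw [hE, zpow_mul, zpow_natCast]
      congr 1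
      rw [← pow_mul, show d * ℓ ^ 2 = ℓ * (d * ℓ) from by ring, pow_mul, hvℓu, hWeq]
    rw [hunit]
    ring
  · rintro ⟨a', rfl⟩ ht
    unfold balancedGaussBinomial
    rw [← hQ, hlucasQ (ℓ * a') t]
    have : t % ℓ ≠ 0 := fun hc => ht (Nat.dvd_of_mod_eq_zero hc)
    obtain ⟨u, hu⟩ : ∃ u, t % ℓ = u + 1 := ⟨t % ℓ - 1, by omega⟩
    rw [Nat.mul_mod_right, hu, GaussAux.gB_zero]
    simp
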